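/- arXiv:1707.09477 — 2 statements merged into one kernel-verified Lean document; each statement's English description precedes it below -/
import Mathlib

section
/- For every integer k ≥ 1, ∑_{n=1}^{F_k − 1} ⌊φ² n⌋ = (1/2)(F_{k+2} − 1)(F_k − 1). -/
set_option maxHeartbeats 1000000

open Real Finset

private lemma sqrt5_sq : (Real.sqrt 5) ^ 2 = 5 := Real.sq_sqrt (by norm_num)
private lemma sqrt5_gt : 2 < Real.sqrt 5 := by
  nlinarith [sqrt5_sq, Real.sqrt_nonneg 5]
private lemma sqrt5_lt : Real.sqrt 5 < 3 := by
  nlinarith [sqrt5_sq, Real.sqrt_nonneg 5]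

private lemma key (k : ℕ) (n : ℕ) (hn1 : 1 ≤ n) (hn2 : n ≤ Nat.fib k - 1) (j : ℤ) :
    ((Real.sqrt 5 - 1)/2)^k < |(n : ℝ) * ((1 + Real.sqrt 5)/2) - j| := by
  have hs2 : (Real.sqrt 5) ^ 2 = 5 := sqrt5_sq
  have hsgt : 2 < Real.sqrt 5 := sqrt5_gt
  have hslt : Real.sqrt 5 < 3 := sqrt5_lt
  set s := Real.sqrt 5 with hs
  set r : ℝ := ((s - 1)/2)^k with hr
  set p : ℝ := ((1 + s)/2)^k with hp
  have hrpos : 0 < r := pow_pos (by linarith) k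
  have hr1 : r ≤ 1 := pow_le_one₀ (by linarith) (by linarith)
  have hpr : p * r = 1 := by
    rw [hp, hr, ← mul_pow]
    have h1 : (1 + s)/2 * ((s - 1)/2) = 1 := by nlinarith
    rw [h1, one_pow]
  have hψ : ((1 - s)/2 : ℝ) ^ k = (-1:ℝ)^k * r := by
    rw [hr, ← neg_one_mul, ← mul_pow]
    congr 1; ring
  have hfib : s * (Nat.fib k : ℝ) = p - (-1:ℝ)^k * r := by
    have h := Real.coe_fib_eq k
    have hc : goldenConj ^ k = (-1:ℝ)^k * r := hψ
    have hg : goldenRatio ^ k = p := rfl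
    rw [hc, hg] at h
    have hsne : s ≠ 0 := by positivity
    rw [h, ← hs]; field_simp
  -- the integer j^2 - j n - n^2 is nonzero
  have hm : (j^2 - j * n - (n:ℤ)^2 : ℤ) ≠ 0 := by
    intro h0
    have h5 : ((2*j - n)^2 : ℤ) = 5 * n^2 := by linear_combination 4 * h0
    have hirr : Irrational (Real.sqrt 5) :=
      (Nat.Prime.irrational_sqrt (by norm_num : Nat.Prime 5))
    have hnR : (0:ℝ) < (n:ℝ) := by exact_mod_cast hn1
    have hcast : (2*(j:ℝ) - n)^2 = (s * n)^2 := by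
      have h6 : (2*(j:ℝ) - n)^2 = 5 * (n:ℝ)^2 := by exact_mod_cast h5
      rw [mul_pow, hs2]; exact h6
    have habs : |2*(j:ℝ) - n| = s * n := by
      rw [← Real.sqrt_sq (by positivity : (0:ℝ) ≤ s * n), ← hcast, Real.sqrt_sq_eq_abs]
    have hrat : s = ((|2*j - (n:ℤ)| : ℤ) : ℝ) / ((n:ℤ) : ℝ) := by
      push_cast
      rw [eq_div_iff (ne_of_gt hnR)]
      linarith [habs]
    exact (irrational_iff_ne_rational s).mp hirr _ _ (by exact_mod_cast ne_of_gt hn1) hrat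
  have hm1 : (1:ℝ) ≤ |((j:ℝ)^2 - j * n - (n:ℝ)^2)| := by
    have h1 : (1:ℤ) ≤ |j^2 - j * n - (n:ℤ)^2| := Int.one_le_abs hm
    have h2 : ((|j^2 - j * n - (n:ℤ)^2| : ℤ) : ℝ) = |((j:ℝ)^2 - j * n - (n:ℝ)^2)| := by
      push_cast; ring_nf
    calc (1:ℝ) ≤ ((|j^2 - j * n - (n:ℤ)^2| : ℤ) : ℝ) := by exact_mod_cast h1
      _ = _ := h2
  have hfact : (j:ℝ)^2 - j * n - (n:ℝ)^2 =
      ((n:ℝ) * ((1 + s)/2) - j) * ((n:ℝ) * ((1 - s)/2) - j) := by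
    linear_combination ((n:ℝ)^2/4) * hs2
  by_contra hcon
  push_neg at hcon
  set d : ℝ := |(n : ℝ) * ((1 + s)/2) - j| with hd
  have hd0 : 0 ≤ d := abs_nonneg _
  have hnle : (n:ℝ) ≤ (Nat.fib k : ℝ) - 1 := by
    have h1 : n + 1 ≤ Nat.fib k := by omega
    have h2 : ((n:ℝ) + 1) ≤ (Nat.fib k : ℝ) := by exact_mod_cast h1
    linarith
  have hother : |(n:ℝ) * ((1 - s)/2) - j| ≤ d + n * s := by
    have h1 : (n:ℝ) * ((1 - s)/2) - j = ((n:ℝ) * ((1 + s)/2) - j) - n * s := by ring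
    rw [h1]
    calc |((n:ℝ) * ((1 + s)/2) - j) - n * s| ≤ d + |(n:ℝ) * s| := abs_sub _ _
      _ = d + n * s := by rw [abs_of_nonneg (by positivity)]
  have hprod : (1:ℝ) ≤ d * |(n:ℝ) * ((1 - s)/2) - j| := by
    rw [hfact, abs_mul] at hm1; exact hm1
  have hsn : (n:ℝ) * s ≤ p - (-1:ℝ)^k * r - s := by
    have h1 : s * (n:ℝ) ≤ s * ((Nat.fib k : ℝ) - 1) :=
      mul_le_mul_of_nonneg_left hnle (by linarith)
    nlinarith [hfib]
  have h1 : d * |(n:ℝ) * ((1 - s)/2) - j| ≤ r * (r + (p - (-1:ℝ)^k * r - s)) := by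
    apply mul_le_mul hcon _ (abs_nonneg _) (le_of_lt hrpos)
    calc |(n:ℝ) * ((1 - s)/2) - j| ≤ d + n * s := hother
      _ ≤ r + (p - (-1:ℝ)^k * r - s) := by linarith
  have hsign : ((-1:ℝ)^k = 1 ∨ (-1:ℝ)^k = -1) := by
    rcases Nat.even_or_odd k with h | h
    · left; exact h.neg_one_pow
    · right; exact h.neg_one_pow
  rcases hsign with h | h <;> rw [h] at h1 <;>
    nlinarith [hpr, hrpos, hr1, hsgt, hprod]

private lemma pairlem (k n m : ℕ) (hn : 1 ≤ n) (hm : 1 ≤ m) (hnm : n + m = Nat.fib k) :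
    ⌊((1 + Real.sqrt 5)/2)^2 * (n:ℝ)⌋ + ⌊((1 + Real.sqrt 5)/2)^2 * (m:ℝ)⌋
      = (Nat.fib (k+2) : ℤ) - 1 := by
  have hs2 : (Real.sqrt 5) ^ 2 = 5 := sqrt5_sq
  have hsgt : 2 < Real.sqrt 5 := sqrt5_gt
  have hslt : Real.sqrt 5 < 3 := sqrt5_lt
  set s := Real.sqrt 5 with hs
  set r : ℝ := ((s - 1)/2)^k with hr
  set p : ℝ := ((1 + s)/2)^k with hp
  have hrpos : 0 < r := pow_pos (by linarith) k
  have hr1 : r ≤ 1 := pow_le_one₀ (by linarith) (by linarith)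
  have hψ : ((1 - s)/2 : ℝ) ^ k = (-1:ℝ)^k * r := by
    rw [hr, ← neg_one_mul, ← mul_pow]; congr 1; ring
  have hfib : s * (Nat.fib k : ℝ) = p - (-1:ℝ)^k * r := by
    have h := Real.coe_fib_eq k
    have hc : goldenConj ^ k = (-1:ℝ)^k * r := hψ
    have hg : goldenRatio ^ k = p := rfl
    rw [hc, hg] at h
    have hsne : s ≠ 0 := by positivity
    rw [h, ← hs]; field_simp
  have hfib2 : s * (Nat.fib (k+2) : ℝ)
      = ((1+s)/2)^2 * p - (-1:ℝ)^k * ((1-s)/2)^2 * r := by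
    have h := Real.coe_fib_eq (k+2)
    have hc : goldenConj ^ (k+2) = (-1:ℝ)^k * ((1-s)/2)^2 * r := by
      show ((1-s)/2 : ℝ) ^ (k+2) = _
      rw [pow_add, hψ]; ring
    have hg : goldenRatio ^ (k+2) = ((1+s)/2)^2 * p := by
      show ((1+s)/2 : ℝ) ^ (k+2) = _
      rw [pow_add, hp]; ring
    rw [hc, hg] at h
    have hsne : s ≠ 0 := by positivity
    rw [h, ← hs]; field_simp
  have hs0 : (0:ℝ) < s := by linarith
  have hsum : ((1 + s)/2)^2 * ((Nat.fib k : ℝ)) = (Nat.fib (k+2) : ℝ) - (-1:ℝ)^k * r := by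
    apply mul_left_cancel₀ (ne_of_gt hs0)
    linear_combination ((1+s)/2)^2 * hfib - hfib2
  set α : ℝ := ((1 + s)/2)^2 with hα
  set x : ℝ := α * (n:ℝ) with hx
  set y : ℝ := α * (m:ℝ) with hy
  have hnmR : ((n:ℝ) + m) = (Nat.fib k : ℝ) := by exact_mod_cast hnm
  have hxy : x + y = (Nat.fib (k+2) : ℝ) - (-1:ℝ)^k * r := by
    rw [hx, hy, ← mul_add, hnmR, hsum]
  have fracb : ∀ z : ℕ, 1 ≤ z → z ≤ Nat.fib k - 1 →
      r < α * z - ⌊α * z⌋ ∧ α * z - ⌊α * z⌋ < 1 - r := by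
    intro z hz1 hz2
    have h1 := key k z hz1 hz2 (⌊α * (z:ℝ)⌋ - z)
    have h2 := key k z hz1 hz2 (⌊α * (z:ℝ)⌋ + 1 - z)
    have e1 : (z:ℝ) * ((1 + s)/2) - ((⌊α * (z:ℝ)⌋ - (z:ℤ) : ℤ) : ℝ)
        = α * z - ⌊α * z⌋ := by
      push_cast
      rw [hα]
      linear_combination (-(z:ℝ)/4) * hs2
    have e2 : (z:ℝ) * ((1 + s)/2) - ((⌊α * (z:ℝ)⌋ + 1 - (z:ℤ) : ℤ) : ℝ)
        = α * z - ⌊α * z⌋ - 1 := by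
      push_cast
      rw [hα]
      linear_combination (-(z:ℝ)/4) * hs2
    rw [e1] at h1
    rw [e2] at h2
    have hf1 : 0 ≤ α * (z:ℝ) - ⌊α * (z:ℝ)⌋ := by
      have := Int.floor_le (α * (z:ℝ)); linarith
    have hf2 : α * (z:ℝ) - ⌊α * (z:ℝ)⌋ < 1 := by
      have := Int.lt_floor_add_one (α * (z:ℝ)); linarith
    constructor
    · rwa [abs_of_nonneg hf1] at h1
    · have e3 : |α * (z:ℝ) - ⌊α * (z:ℝ)⌋ - 1| = 1 - (α * (z:ℝ) - ⌊α * (z:ℝ)⌋) := by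
        rw [abs_of_nonpos (by linarith)]; ring
      rw [e3] at h2; linarith
  obtain ⟨a1, a2⟩ := fracb n hn (by omega)
  obtain ⟨b1, b2⟩ := fracb m hm (by omega)
  have hsign : ((-1:ℝ)^k = 1 ∨ (-1:ℝ)^k = -1) := by
    rcases Nat.even_or_odd k with h | h
    · left; exact h.neg_one_pow
    · right; exact h.neg_one_pow
  have hlow : ((Nat.fib (k+2) : ℝ)) - 2 < (⌊x⌋ : ℝ) + (⌊y⌋ : ℝ) := by
    rcases hsign with h | h <;> (rw [h] at hxy; linarith)
  have hhigh : (⌊x⌋ : ℝ) + (⌊y⌋ : ℝ) < ((Nat.fib (k+2) : ℝ)) := by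
    rcases hsign with h | h <;> (rw [h] at hxy; linarith)
  have hlowZ : (Nat.fib (k+2) : ℤ) - 2 < ⌊x⌋ + ⌊y⌋ := by
    have : (((Nat.fib (k+2) : ℤ) - 2 : ℤ) : ℝ) < ((⌊x⌋ + ⌊y⌋ : ℤ) : ℝ) := by push_cast; linarith
    exact_mod_cast this
  have hhighZ : ⌊x⌋ + ⌊y⌋ < (Nat.fib (k+2) : ℤ) := by
    have : ((⌊x⌋ + ⌊y⌋ : ℤ) : ℝ) < (((Nat.fib (k+2) : ℤ)) : ℝ) := by push_cast; linarith
    exact_mod_cast this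
  omega

theorem A'_k_one (k : ℕ) (hk : 1 ≤ k) :
    (∑ n ∈ Finset.Icc 1 (Nat.fib k - 1), (⌊((1 + Real.sqrt 5) / 2) ^ 2 * (n : ℝ)⌋ : ℝ)) =
      (1 / 2) * ((Nat.fib (k + 2) : ℝ) - 1) * ((Nat.fib k : ℝ) - 1) := by
  have hfpos : 1 ≤ Nat.fib k := Nat.fib_pos.mpr hk
  set M : ℕ := Nat.fib k - 1 with hM
  set g : ℕ → ℝ := fun n => (⌊((1 + Real.sqrt 5) / 2) ^ 2 * (n : ℝ)⌋ : ℝ) with hg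
  have hrange : ∑ n ∈ Finset.Icc 1 M, g n = ∑ i ∈ Finset.range M, g (i + 1) := by
    rw [← Finset.Ico_add_one_right_eq_Icc, Finset.sum_Ico_eq_sum_range, Nat.add_sub_cancel]
    exact Finset.sum_congr rfl fun i _ => by rw [Nat.add_comm]
  have hreflect : ∑ i ∈ Finset.range M, g (i + 1) = ∑ i ∈ Finset.range M, g (M - i) := by
    rw [← Finset.sum_range_reflect (fun i => g (i + 1)) M]
    apply Finset.sum_congr rfl
    intro i hi
    rw [Finset.mem_range] at hi
    congr 1
    omega
  have hpair : ∀ i ∈ Finset.range M, g (i + 1) + g (M - i) = (Nat.fib (k+2) : ℝ) - 1 := by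
    intro i hi
    rw [Finset.mem_range] at hi
    have h := pairlem k (i + 1) (M - i) (by omega) (by omega) (by omega)
    have h2 := congrArg (fun t : ℤ => (t:ℝ)) h
    push_cast at h2
    rw [hg]
    push_cast
    linarith
  have h2S : 2 * (∑ n ∈ Finset.Icc 1 M, g n) = M * ((Nat.fib (k+2) : ℝ) - 1) := by
    calc 2 * (∑ n ∈ Finset.Icc 1 M, g n)
        = (∑ i ∈ Finset.range M, g (i + 1)) + (∑ i ∈ Finset.range M, g (M - i)) := by
          rw [hrange, hreflect]; ring
      _ = ∑ i ∈ Finset.range M, (g (i + 1) + g (M - i)) := (Finset.sum_add_distrib).symm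
      _ = ∑ i ∈ Finset.range M, ((Nat.fib (k+2) : ℝ) - 1) := Finset.sum_congr rfl hpair
      _ = M * ((Nat.fib (k+2) : ℝ) - 1) := by rw [Finset.sum_const, Finset.card_range]; ring
  have hMcast : (M : ℝ) = (Nat.fib k : ℝ) - 1 := by
    rw [hM, Nat.cast_sub hfpos]; push_cast; ring
  rw [hMcast] at h2S
  linarith
end

section
/- For every integer k ≥ 1, ∑_{n=1}^{F_{2k−1} − 1} ⌊φ n⌋³ = (1/4)(F_{2k−1} − 1)(F_{2k} − 1) · (1/5)(L_{4k} − 3L_{2k+1} − L_{2k} + 3). -/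
open Finset Nat

def lucas : ℕ → ℕ
  | 0 => 2
  | 1 => 1
  | n + 2 => lucas (n + 1) + lucas n

lemma cassini (j : ℕ) :
    (Nat.fib j : ℤ) * Nat.fib (j + 2) = (Nat.fib (j + 1) : ℤ) ^ 2 + (-1) ^ (j + 1) := by
  induction j with
  | zero => simp
  | succ n ih =>
    have h1 : (Nat.fib (n + 2) : ℤ) = Nat.fib n + Nat.fib (n + 1) := by
      rw [Nat.fib_add_two]; push_cast; ring
    have h2 : (Nat.fib (n + 3) : ℤ) = Nat.fib (n + 1) + Nat.fib (n + 2) := by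
      rw [show n + 3 = (n + 1) + 2 from rfl, Nat.fib_add_two]; push_cast; ring
    rw [show n + 1 + 2 = n + 3 from rfl, h2]
    linear_combination (-1 : ℤ) * ih - (Nat.fib (n + 2) : ℤ) * h1

lemma lucas_eq : ∀ n, (lucas n : ℤ) = 2 * Nat.fib (n + 1) - Nat.fib n
  | 0 => by simp [lucas]
  | 1 => by simp [lucas]
  | n + 2 => by
    have i1 := lucas_eq (n + 1)
    have i2 := lucas_eq n
    have h1 : (Nat.fib (n + 2) : ℤ) = Nat.fib n + Nat.fib (n + 1) := by
      rw [Nat.fib_add_two]; push_cast; ring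
    have h2 : (Nat.fib (n + 3) : ℤ) = Nat.fib (n + 1) + Nat.fib (n + 2) := by
      rw [show n + 3 = (n + 1) + 2 from rfl, Nat.fib_add_two]; push_cast; ring
    have h0 : (lucas (n + 2) : ℤ) = lucas (n + 1) + lucas n := by
      rw [show lucas (n + 2) = lucas (n + 1) + lucas n from rfl]; push_cast; ring
    rw [h0, show n + 2 + 1 = n + 3 from rfl, h2, h1]
    linarith

lemma psum1 (t : ℕ) : 2 * ∑ n ∈ Icc 1 t, (n : ℤ) = t * (t + 1) := by
  induction t with
  | zero => simp
  | succ m ih =>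
    rw [Finset.sum_Icc_succ_top (by omega)]
    push_cast
    push_cast at ih
    linarith

lemma psum2 (t : ℕ) : 6 * ∑ n ∈ Icc 1 t, (n : ℤ) ^ 2 = t * (t + 1) * (2 * t + 1) := by
  induction t with
  | zero => simp
  | succ m ih =>
    rw [Finset.sum_Icc_succ_top (by omega)]
    push_cast
    push_cast at ih
    linarith

lemma psum3 (t : ℕ) : 4 * ∑ n ∈ Icc 1 t, (n : ℤ) ^ 3 = (t : ℤ) ^ 2 * (t + 1) ^ 2 := by
  induction t with
  | zero => simp
  | succ m ih =>
    rw [Finset.sum_Icc_succ_top (by omega)]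
    push_cast
    push_cast at ih
    nlinarith [ih]


set_option maxHeartbeats 1000000 in
lemma floor_eq_div (m n : ℕ) (hm : Odd m) (hq2 : 2 ≤ Nat.fib m)
    (hn1 : 1 ≤ n) (hn2 : n ≤ Nat.fib m - 1) :
    ⌊(1 + Real.sqrt 5) / 2 * (n : ℝ)⌋ = ((Nat.fib (m + 1) * n / Nat.fib m : ℕ) : ℤ) := by
  set q := Nat.fib m with hq
  set p := Nat.fib (m + 1) with hp
  have hm1 : 1 ≤ m := by
    rcases hm with ⟨j, rfl⟩; omega
  have hgold : (1 + Real.sqrt 5) / 2 = Real.goldenRatio := rfl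
  rw [hgold]
  -- q * Real.goldenRatio = p + (Real.goldenRatio ^ m)⁻¹
  have hconj : (p : ℝ) - Real.goldenRatio * q = Real.goldenConj ^ m := Real.fib_succ_sub_goldenRatio_mul_fib m
  have hgoldenConj : Real.goldenConj ^ m = -(Real.goldenRatio ^ m)⁻¹ := by
    have h1 : (-Real.goldenConj) ^ m = (Real.goldenRatio⁻¹) ^ m := by rw [← Real.inv_goldenRatio]
    have h2 : (-Real.goldenConj) ^ m = -(Real.goldenConj ^ m) := Odd.neg_pow hm Real.goldenConj
    rw [← inv_pow, ← h1, h2, neg_neg]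
  have hqgoldenRatio : (q : ℝ) * Real.goldenRatio = p + (Real.goldenRatio ^ m)⁻¹ := by
    rw [hgoldenConj] at hconj; linarith
  have hgoldenRatiopos : (0 : ℝ) < Real.goldenRatio ^ m := pow_pos Real.goldenRatio_pos m
  -- q - 1 < Real.goldenRatio ^ m
  have hexp : Real.goldenRatio * Nat.fib m + Nat.fib (m - 1) = Real.goldenRatio ^ m := by
    have := Real.goldenRatio_mul_fib_succ_add_fib (m - 1)
    rwa [show m - 1 + 1 = m by omega] at this
  have hqlt : (q : ℝ) - 1 < Real.goldenRatio ^ m := by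
    have h1 : (q : ℝ) ≤ Real.goldenRatio * q := by
      nlinarith [Real.one_lt_goldenRatio, Nat.cast_nonneg (α := ℝ) q]
    have h2 : (0 : ℝ) ≤ (Nat.fib (m - 1) : ℝ) := Nat.cast_nonneg _
    rw [← hexp, ← hq]
    linarith
  set d := p * n / q with hd
  set r := p * n % q with hr
  have hdm : q * d + r = p * n := Nat.div_add_mod (p * n) q
  have hrlt : r < q := Nat.mod_lt _ (by omega)
  have hnq : (n : ℝ) ≤ (q : ℝ) - 1 := by
    have : (n : ℝ) ≤ ((q - 1 : ℕ) : ℝ) := by exact_mod_cast hn2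
    rw [Nat.cast_sub (by omega)] at this; exact_mod_cast this
  have hqpos : (0 : ℝ) < q := by positivity
  rw [Int.floor_eq_iff]
  constructor
  · -- d ≤ Real.goldenRatio * n
    have h1 : (d : ℝ) * q ≤ p * n := by
      have h : q * d ≤ p * n := by omega
      have h' := (Nat.cast_le (α := ℝ)).2 h
      push_cast at h'; linarith
    have h2 : (p : ℝ) * n ≤ Real.goldenRatio * q * n := by
      have hp' : (p : ℝ) ≤ Real.goldenRatio * q := by
        have : (0:ℝ) < (Real.goldenRatio ^ m)⁻¹ := by positivity
        nlinarith [hqgoldenRatio]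
      nlinarith [Nat.cast_nonneg (α := ℝ) n]
    have h3 : (d : ℝ) * q ≤ Real.goldenRatio * q * n := h1.trans h2
    push_cast
    nlinarith [h3, hqpos]
  · -- Real.goldenRatio * n < d + 1
    have h1 : Real.goldenRatio * n * q < p * n + 1 := by
      have hn' : (n : ℝ) * (Real.goldenRatio ^ m)⁻¹ < 1 := by
        rw [← div_eq_mul_inv, div_lt_one hgoldenRatiopos]
        linarith
      have h : Real.goldenRatio * n * q = p * n + n * (Real.goldenRatio ^ m)⁻¹ := by
        nlinarith [hqgoldenRatio]
      rw [h]; linarith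
    have h2 : (p : ℝ) * n + 1 ≤ ((d : ℝ) + 1) * q := by
      have hqq : q * (d + 1) = q * d + q := by ring
      have h : p * n + 1 ≤ q * (d + 1) := by omega
      have h' := (Nat.cast_le (α := ℝ)).2 h
      push_cast at h'; linarith
    have h3 : Real.goldenRatio * n * q < ((d : ℝ) + 1) * q := h1.trans_le h2
    have h4 : Real.goldenRatio * n < (d : ℝ) + 1 := (mul_lt_mul_iff_of_pos_right hqpos).1 h3
    push_cast
    exact h4


set_option maxHeartbeats 1000000 in
lemma sum_div_cubes (q p : ℕ) (hq2 : 2 ≤ q) (hrel : (p : ℤ) ^ 2 + 1 = p * q + q ^ 2) :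
    20 * ∑ n ∈ Icc 1 (q - 1), ((p * n / q : ℕ) : ℤ) ^ 3 =
      ((q : ℤ) - 1) * ((p : ℤ) - 1) *
        (3 * p ^ 2 + 2 * p * q + 2 * q ^ 2 - 10 * p - 5 * q + 3) := by
  have hrelN : p ^ 2 + 1 = q * (p + q) := by
    have : ((p ^ 2 + 1 : ℕ) : ℤ) = ((q * (p + q) : ℕ) : ℤ) := by push_cast; linarith
    exact_mod_cast this
  have hdvd : q ∣ p ^ 2 + 1 := ⟨p + q, hrelN⟩
  set s := Icc 1 (q - 1) with hs
  set σ : ℕ → ℕ := fun n => p * n % q with hσ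
  have hqn : ∀ n, 1 ≤ n → n ≤ q - 1 → ¬ q ∣ p * n := by
    intro n h1 h2 hc
    have hc2 : q ∣ p ^ 2 * n := by
      obtain ⟨c, hcc⟩ := hc
      exact ⟨p * c, by rw [pow_two, mul_assoc, hcc]; ring⟩
    have hc3 : q ∣ (p ^ 2 + 1) * n := hdvd.mul_right n
    have hkey : (p ^ 2 + 1) * n = p ^ 2 * n + n := by ring
    have hqdn : q ∣ n := by
      have := Nat.dvd_sub hc3 hc2
      rwa [hkey, Nat.add_sub_cancel_left] at this
    have := Nat.le_of_dvd (by omega) hqdn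
    omega
  have hmaps : ∀ n ∈ s, σ n ∈ s := by
    intro n hn
    simp only [hs, mem_Icc] at hn ⊢
    have hlt : p * n % q < q := Nat.mod_lt _ (by omega)
    have hne : p * n % q ≠ 0 := fun h => hqn n hn.1 hn.2 (Nat.dvd_of_mod_eq_zero h)
    simp only [hσ]
    omega
  have hinv : ∀ n ∈ s, σ (σ n) = q - n := by
    intro n hn
    have hn' := hn
    simp only [hs, mem_Icc] at hn'
    have ht := hmaps _ (hmaps _ hn)
    simp only [hs, mem_Icc] at ht
    have h1 : σ (σ n) ≡ p ^ 2 * n [MOD q] := by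
      have e1 : p * n % q ≡ p * n [MOD q] := Nat.mod_modEq _ _
      have e2 : p * (p * n % q) ≡ p * (p * n) [MOD q] := e1.mul_left p
      have e3 : σ (σ n) ≡ p * (p * n % q) [MOD q] := Nat.mod_modEq _ _
      have := e3.trans e2
      rwa [show p * (p * n) = p ^ 2 * n by ring] at this
    have h2 : σ (σ n) + n ≡ 0 [MOD q] := by
      have := h1.add_right n
      have h0 : p ^ 2 * n + n ≡ 0 [MOD q] := by
        rw [Nat.modEq_zero_iff_dvd]
        exact ⟨(p + q) * n, by rw [show p^2*n+n = (p^2+1)*n by ring, hrelN]; ring⟩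
      exact this.trans h0
    have hdvd2 : q ∣ σ (σ n) + n := (Nat.modEq_zero_iff_dvd).1 h2
    have hge := Nat.le_of_dvd (by omega) hdvd2
    have hdvd3 : q ∣ σ (σ n) + n - q := Nat.dvd_sub hdvd2 dvd_rfl
    have := Nat.eq_zero_of_dvd_of_lt hdvd3 (show σ (σ n) + n - q < q by omega)
    omega
  have hinjOn : Set.InjOn σ s := by
    intro a ha b hb hab
    have h1 : σ (σ a) = σ (σ b) := by rw [hab]
    rw [hinv a ha, hinv b hb] at h1
    have ha' := ha; have hb' := hb
    simp only [hs, coe_Icc, Set.mem_Icc] at ha' hb'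
    omega
  have himg : s.image σ = s := by
    apply Finset.eq_of_subset_of_card_le
    · intro x hx
      obtain ⟨n, hn, rfl⟩ := Finset.mem_image.1 hx
      exact hmaps n hn
    · rw [Finset.card_image_of_injOn hinjOn]
  have master : ∀ f : ℕ → ℤ, ∑ n ∈ s, f (σ n) = ∑ n ∈ s, f n := by
    intro f
    rw [← Finset.sum_image (fun a ha b hb h => hinjOn ha hb h), himg]
  have key : ∀ g : ℕ → ℕ → ℤ,
      ∑ n ∈ s, g n (σ n) = ∑ n ∈ s, g (σ n) (q - n) := by
    intro g
    rw [← master (fun t => g t (σ t))]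
    exact Finset.sum_congr rfl fun n hn => by rw [hinv n hn]
  have hmem : ∀ n ∈ s, ((q - n : ℕ) : ℤ) = (q : ℤ) - n := by
    intro n hn
    simp only [hs, mem_Icc] at hn
    rw [Nat.cast_sub (by omega)]
  -- named sums
  set N1 := ∑ n ∈ s, (n : ℤ) with hN1
  set N2 := ∑ n ∈ s, (n : ℤ) ^ 2 with hN2
  set N3 := ∑ n ∈ s, (n : ℤ) ^ 3 with hN3
  set S11 := ∑ n ∈ s, (n : ℤ) * (σ n : ℤ) with hS11
  set S21 := ∑ n ∈ s, (n : ℤ) ^ 2 * (σ n : ℤ) with hS21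
  set S12 := ∑ n ∈ s, (n : ℤ) * (σ n : ℤ) ^ 2 with hS12
  set R3 := ∑ n ∈ s, (σ n : ℤ) ^ 3 with hR3
  have hR1 : ∑ n ∈ s, ((σ n : ℕ) : ℤ) = N1 := master (fun t => (t : ℤ))
  have hR2 : ∑ n ∈ s, ((σ n : ℕ) : ℤ) ^ 2 = N2 := master (fun t => (t : ℤ) ^ 2)
  have hR3' : R3 = N3 := master (fun t => (t : ℤ) ^ 3)
  -- E4 : 2 * S11 = q * N1
  have E4 : 2 * S11 = (q : ℤ) * N1 := by
    have t1 : S11 = ∑ n ∈ s, (σ n : ℤ) * ((q : ℤ) - n) := by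
      rw [hS11, key (fun a b => (a : ℤ) * (b : ℤ))]
      exact Finset.sum_congr rfl fun n hn => by rw [hmem n hn]
    have t2 : ∑ n ∈ s, (σ n : ℤ) * ((q : ℤ) - n) =
        (q : ℤ) * (∑ n ∈ s, ((σ n : ℕ) : ℤ)) - ∑ n ∈ s, (n : ℤ) * (σ n : ℤ) := by
      rw [Finset.mul_sum, ← Finset.sum_sub_distrib]
      exact Finset.sum_congr rfl fun n _ => by ring
    rw [hR1] at t2
    have t3 := t1.trans t2
    rw [← hS11] at t3
    linarith
  -- E2 : S21 = q * N2 - S12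
  have E2 : S21 = (q : ℤ) * N2 - S12 := by
    have t1 : S21 = ∑ n ∈ s, (σ n : ℤ) ^ 2 * ((q : ℤ) - n) := by
      rw [hS21, key (fun a b => (a : ℤ) ^ 2 * (b : ℤ))]
      exact Finset.sum_congr rfl fun n hn => by rw [hmem n hn]
    have t2 : ∑ n ∈ s, (σ n : ℤ) ^ 2 * ((q : ℤ) - n) =
        (q : ℤ) * (∑ n ∈ s, ((σ n : ℕ) : ℤ) ^ 2) - ∑ n ∈ s, (n : ℤ) * (σ n : ℤ) ^ 2 := by
      rw [Finset.mul_sum, ← Finset.sum_sub_distrib]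
      exact Finset.sum_congr rfl fun n _ => by ring
    rw [hR2] at t2
    rw [t1, t2, ← hS12]
  -- E3 : S12 = q^2 * N1 - 2*q*S11 + S21
  have E3 : S12 = (q : ℤ) ^ 2 * N1 - 2 * q * S11 + S21 := by
    have t1 : S12 = ∑ n ∈ s, (σ n : ℤ) * ((q : ℤ) - n) ^ 2 := by
      rw [hS12, key (fun a b => (a : ℤ) * (b : ℤ) ^ 2)]
      exact Finset.sum_congr rfl fun n hn => by rw [hmem n hn]
    have t2 : ∑ n ∈ s, (σ n : ℤ) * ((q : ℤ) - n) ^ 2 =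
        (q : ℤ) ^ 2 * (∑ n ∈ s, ((σ n : ℕ) : ℤ)) -
          2 * q * (∑ n ∈ s, (n : ℤ) * (σ n : ℤ)) +
          ∑ n ∈ s, (n : ℤ) ^ 2 * (σ n : ℤ) := by
      rw [Finset.mul_sum, Finset.mul_sum, ← Finset.sum_sub_distrib, ← Finset.sum_add_distrib]
      exact Finset.sum_congr rfl fun n _ => by ring
    rw [hR1] at t2
    rw [t1, t2, ← hS11, ← hS21]
  -- power sums
  have E5 : 4 * N3 = ((q : ℤ) - 1) ^ 2 * q ^ 2 := by
    have h := psum3 (q - 1)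
    rw [hN3, hs]
    rw [Nat.cast_sub (by omega : 1 ≤ q)] at h
    push_cast at h ⊢
    linear_combination h
  have E6 : 6 * N2 = ((q : ℤ) - 1) * q * (2 * q - 1) := by
    have h := psum2 (q - 1)
    rw [hN2, hs]
    rw [Nat.cast_sub (by omega : 1 ≤ q)] at h
    push_cast at h ⊢
    linear_combination h
  -- main expansion
  set D := ∑ n ∈ s, ((p * n / q : ℕ) : ℤ) ^ 3 with hD
  have hterm : ∀ n ∈ s, (q : ℤ) * ((p * n / q : ℕ) : ℤ) = (p : ℤ) * n - σ n := by
    intro n _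
    have h := Nat.div_add_mod (p * n) q
    have h' : (q : ℤ) * ((p * n / q : ℕ) : ℤ) + ((p * n % q : ℕ) : ℤ) = (p : ℤ) * n := by
      exact_mod_cast congrArg (Nat.cast : ℕ → ℤ) h
    simp only [hσ]
    linarith
  have E1 : (q : ℤ) ^ 3 * D = (p : ℤ) ^ 3 * N3 - 3 * p ^ 2 * S21 + 3 * p * S12 - R3 := by
    have step1 : (q : ℤ) ^ 3 * D = ∑ n ∈ s, ((p : ℤ) * n - σ n) ^ 3 := by
      rw [hD, Finset.mul_sum]
      refine Finset.sum_congr rfl fun n hn => ?_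
      have h := hterm n hn
      calc (q : ℤ) ^ 3 * ((p * n / q : ℕ) : ℤ) ^ 3
          = ((q : ℤ) * ((p * n / q : ℕ) : ℤ)) ^ 3 := by ring
        _ = ((p : ℤ) * n - σ n) ^ 3 := by rw [h]
    rw [step1, hN3, hS21, hS12, hR3]
    rw [Finset.mul_sum, Finset.mul_sum, Finset.mul_sum, ← Finset.sum_sub_distrib,
      ← Finset.sum_add_distrib, ← Finset.sum_sub_distrib]
    exact Finset.sum_congr rfl fun n _ => by ring
  -- assemble
  have main : (q : ℤ) ^ 3 * (20 * D) =
      (q : ℤ) ^ 3 * (((q : ℤ) - 1) * ((p : ℤ) - 1) *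
        (3 * p ^ 2 + 2 * p * q + 2 * q ^ 2 - 10 * p - 5 * q + 3)) := by
    linear_combination (20 : ℤ) * E1 - 20 * hR3' + (30 * p - 30 * p ^ 2) * E2 +
      (30 * p + 30 * p ^ 2) * E3 + (-30 * (p : ℤ) * q - 30 * p ^ 2 * q) * E4 +
      (5 * ((p : ℤ) ^ 3 - 1)) * E5 + (5 * ((p : ℤ) - p ^ 2) * q) * E6 +
      ((q : ℤ) ^ 2 * (q - 1) * (p - 1) * (2 * q - 5)) * hrel
  have hq0 : ((q : ℤ)) ^ 3 ≠ 0 := by positivity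
  exact mul_left_cancel₀ hq0 main
theorem A_odd_three (k : ℕ) (hk : 1 ≤ k) :
    (∑ n ∈ Finset.Icc 1 (Nat.fib (2 * k - 1) - 1), (⌊(1 + Real.sqrt 5) / 2 * (n : ℝ)⌋ : ℝ) ^ 3) =
      (1 / 4) * ((Nat.fib (2 * k - 1) : ℝ) - 1) * ((Nat.fib (2 * k) : ℝ) - 1) *
        ((1 / 5) * ((lucas (4 * k) : ℝ) - 3 * (lucas (2 * k + 1) : ℝ) - (lucas (2 * k) : ℝ) + 3)) := by
  rcases eq_or_lt_of_le hk with h1 | hk2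
  · -- k = 1
    obtain rfl : k = 1 := h1.symm
    norm_num [Nat.fib_one]
  · -- 2 ≤ k
    have hk2' : 2 ≤ k := hk2
    set m := 2 * k - 1 with hmdef
    have hm2k : m + 1 = 2 * k := by omega
    have hmodd : Odd m := ⟨k - 1, by omega⟩
    set q := Nat.fib m with hqdef
    set p := Nat.fib (2 * k) with hpdef
    have hpm : Nat.fib (m + 1) = p := by rw [hm2k]
    have hq2 : 2 ≤ q := by
      have h3 : Nat.fib 3 ≤ Nat.fib m := Nat.fib_mono (by omega)
      simpa [show Nat.fib 3 = 2 from rfl] using h3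
    -- Cassini ⇒ relation
    have hcas := cassini m
    have hidx1 : m + 2 = 2 * k + 1 := by omega
    rw [hidx1, hm2k] at hcas
    rw [← hqdef, ← hpdef] at hcas
    have hneg : (-1 : ℤ) ^ (2 * k) = 1 := by
      rw [pow_mul]; norm_num
    rw [hneg] at hcas
    have hfib21 : (Nat.fib (2 * k + 1) : ℤ) = p + q := by
      rw [show 2 * k + 1 = m + 2 by omega, Nat.fib_add_two, hm2k]
      push_cast; ring
    have hrel : (p : ℤ) ^ 2 + 1 = p * q + q ^ 2 := by
      rw [hfib21] at hcas
      linear_combination -hcas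
    -- rewrite floors
    rw [Finset.sum_congr rfl (fun n hn => by
      simp only [Finset.mem_Icc] at hn
      rw [show (⌊(1 + Real.sqrt 5) / 2 * (n : ℝ)⌋ : ℝ) ^ 3
            = (((p * n / q : ℕ) : ℤ) : ℝ) ^ 3 by
        rw [floor_eq_div m n hmodd hq2 hn.1 hn.2, hpm]])]
    have hsum : ∑ n ∈ Finset.Icc 1 (q - 1), (((p * n / q : ℕ) : ℤ) : ℝ) ^ 3
        = ((∑ n ∈ Finset.Icc 1 (q - 1), ((p * n / q : ℕ) : ℤ) ^ 3 : ℤ) : ℝ) := by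
      push_cast; rfl
    rw [hsum]
    set Dsum := ∑ n ∈ Finset.Icc 1 (q - 1), ((p * n / q : ℕ) : ℤ) ^ 3 with hDsum
    have h20 := sum_div_cubes q p hq2 hrel
    rw [← hDsum] at h20
    have e20 : (20 : ℝ) * ((Dsum : ℤ) : ℝ) =
        ((q : ℝ) - 1) * ((p : ℝ) - 1) *
          (3 * (p : ℝ) ^ 2 + 2 * (p : ℝ) * q + 2 * (q : ℝ) ^ 2 - 10 * (p : ℝ) - 5 * (q : ℝ) + 3) := by
      calc (20 : ℝ) * ((Dsum : ℤ) : ℝ) = (((20 * Dsum : ℤ)) : ℝ) := by push_cast; ring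
        _ = ((((q : ℤ) - 1) * ((p : ℤ) - 1) *
              (3 * (p : ℤ) ^ 2 + 2 * (p : ℤ) * (q : ℤ) + 2 * (q : ℤ) ^ 2
                - 10 * (p : ℤ) - 5 * (q : ℤ) + 3) : ℤ) : ℝ) := by rw [h20]
        _ = ((q : ℝ) - 1) * ((p : ℝ) - 1) *
              (3 * (p : ℝ) ^ 2 + 2 * (p : ℝ) * q + 2 * (q : ℝ) ^ 2 - 10 * (p : ℝ) - 5 * (q : ℝ) + 3) := by
          push_cast; ring
    -- lucas values
    have hfib22 : (Nat.fib (2 * k + 2) : ℤ) = 2 * p + q := by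
      rw [Nat.fib_add_two]
      push_cast [hfib21]
      ring
    have hl2k : ((lucas (2 * k) : ℕ) : ℤ) = p + 2 * q := by
      rw [lucas_eq, hfib21]; ring
    have hl2k1 : ((lucas (2 * k + 1) : ℕ) : ℤ) = 3 * p + q := by
      rw [lucas_eq, show 2 * k + 1 + 1 = 2 * k + 2 from rfl, hfib22, hfib21]; ring
    have hfle : Nat.fib (2 * k) ≤ 2 * Nat.fib (2 * k + 1) := by
      have := Nat.fib_le_fib_succ (n := 2 * k)
      omega
    have hfib4k : (Nat.fib (4 * k) : ℤ) = p * (p + 2 * q) := by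
      rw [show 4 * k = 2 * (2 * k) by ring, Nat.fib_two_mul]
      push_cast [Nat.cast_sub hfle]
      rw [hfib21]
      ring
    have hfib4k1 : (Nat.fib (4 * k + 1) : ℤ) = (p + q) ^ 2 + p ^ 2 := by
      rw [show 4 * k + 1 = 2 * (2 * k) + 1 by ring, Nat.fib_two_mul_add_one]
      push_cast [hfib21]
      ring
    have hl4k : ((lucas (4 * k) : ℕ) : ℤ) = 2 * ((p + q) ^ 2 + p ^ 2) - p * (p + 2 * q) := by
      rw [lucas_eq, hfib4k1, hfib4k]
    -- cast lucas values to ℝ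
    have r1 : ((lucas (4 * k) : ℕ) : ℝ) = 2 * (((p : ℝ) + q) ^ 2 + (p : ℝ) ^ 2) - p * (p + 2 * q) := by
      exact_mod_cast congrArg (fun z : ℤ => (z : ℝ)) hl4k
    have r2 : ((lucas (2 * k + 1) : ℕ) : ℝ) = 3 * (p : ℝ) + q := by
      exact_mod_cast congrArg (fun z : ℤ => (z : ℝ)) hl2k1
    have r3 : ((lucas (2 * k) : ℕ) : ℝ) = (p : ℝ) + 2 * q := by
      exact_mod_cast congrArg (fun z : ℤ => (z : ℝ)) hl2k
    rw [r1, r2, r3]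
    linear_combination (1 / 20 : ℝ) * e20
end
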